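/- For every α ≥ 0, 1/(1 + exp(-α)) ≤ 2^(-exp(-α)). -/
import Mathlib

theorem logistic_le_rpow (α : ℝ) (hα : 0 ≤ α) :
    1 / (1 + Real.exp (-α)) ≤ (2 : ℝ) ^ (-Real.exp (-α)) := by
  set t := Real.exp (-α) with ht
  have ht0 : 0 < t := Real.exp_pos _
  have ht1 : t ≤ 1 := Real.exp_le_one_iff.mpr (by linarith)
  have h2t : (2 : ℝ) ^ t ≤ 1 + t := by
    have hc := convexOn_exp.2 (Set.mem_univ (0 : ℝ)) (Set.mem_univ (Real.log 2))
      (by linarith : (0:ℝ) ≤ 1 - t) ht0.le (by ring)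
    simp only [smul_eq_mul, mul_zero, zero_add, Real.exp_zero, mul_one,
      Real.exp_log (by norm_num : (0:ℝ) < 2)] at hc
    have : (2 : ℝ) ^ t = Real.exp (t * Real.log 2) := by
      rw [Real.rpow_def_of_pos (by norm_num), mul_comm]
    rw [this]
    calc Real.exp (t * Real.log 2) ≤ (1 - t) * 1 + t * 2 := by simpa using hc
      _ = 1 + t := by ring
  have hpos : (0:ℝ) < (2:ℝ) ^ t := Real.rpow_pos_of_pos (by norm_num) _
  rw [Real.rpow_neg (by norm_num : (0:ℝ) ≤ 2)]
  rw [one_div, inv_le_inv₀ (by linarith) hpos]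
  exact h2t
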